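/- arXiv:2507.12613 — 6 statements merged into one kernel-verified Lean document; each statement's English description precedes it below -/
import Mathlib

section
/- The triangles of the infinite fan graph F∞ are exactly the sets {none, some i, some (i+1)} for i ∈ ℤ; in particular, every triangle of F∞ contains the centre `none`. -/
/-- Adjacency relation of the infinite fan graph on `Option ℤ`. -/
def fanAdj : Option ℤ → Option ℤ → Prop
  | some i, some j => |i - j| = 1
  | some _, none => True
  | none, some _ => True
  | none, none => False

/-- The infinite fan graph `F∞`: the centre `none` is adjacent to every `some i`,
and `some i` is adjacent to `some j` iff `|i - j| = 1`. -/
def fanGraph : SimpleGraph (Option ℤ) where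
  Adj := fanAdj
  symm := by
    refine ⟨?_⟩
    rintro (_ | i) (_ | j) h
    · exact h.elim
    · trivial
    · trivial
    · show |j - i| = 1
      rw [abs_sub_comm]
      exact h
  loopless := by
    refine ⟨?_⟩
    rintro (_ | i) h
    · exact h.elim
    · have : |i - i| = 1 := h
      simp at this

lemma no_three_ints (i j k : ℤ) (h1 : |i - j| = 1) (h2 : |j - k| = 1) (h3 : |i - k| = 1) : False := by
  rcases abs_eq (by norm_num : (0:ℤ) ≤ 1) |>.mp h1 with h | h <;>
  rcases abs_eq (by norm_num : (0:ℤ) ≤ 1) |>.mp h2 with h' | h' <;>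
  rcases abs_eq (by norm_num : (0:ℤ) ≤ 1) |>.mp h3 with h'' | h'' <;> omega

lemma pair_form (s : Finset (Option ℤ)) (hs : fanGraph.IsNClique 3 s)
    (a b : ℤ) (ha : some a ∈ s) (hb : some b ∈ s) (hab : a ≠ b) :
    s = {none, some a, some b} := by
  have hn : none ∈ s := by
    by_contra hn
    -- third element
    have hcard := hs.card_eq
    obtain ⟨x, y, z, hxy, hxz, hyz, hset⟩ := Finset.card_eq_three.mp hcard
    -- every element of s is some
    have hall : ∀ v ∈ s, ∃ c : ℤ, v = some c := by
      rintro (_ | c) hv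
      · exact absurd hv hn
      · exact ⟨c, rfl⟩
    obtain ⟨i, hi⟩ := hall x (hset ▸ by simp)
    obtain ⟨j, hj⟩ := hall y (hset ▸ by simp)
    obtain ⟨k, hk⟩ := hall z (hset ▸ by simp)
    subst hi hj hk
    have h1 : fanGraph.Adj (some i) (some j) := hs.1 (hset ▸ by simp) (hset ▸ by simp) hxy
    have h2 : fanGraph.Adj (some j) (some k) := hs.1 (hset ▸ by simp) (hset ▸ by simp) hyz
    have h3 : fanGraph.Adj (some i) (some k) := hs.1 (hset ▸ by simp) (hset ▸ by simp) hxz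
    exact no_three_ints i j k h1 h2 h3
  have hab' : fanGraph.Adj (some a) (some b) := hs.1 ha hb (by simp [hab])
  apply Finset.eq_of_subset_of_card_le
  · rintro (_ | c) hv
    · simp
    · simp only [Finset.mem_insert, Finset.mem_singleton]
      by_contra hc
      push_neg at hc
      have hca : c ≠ a := fun h => by simp [h] at hc
      have hcb : c ≠ b := fun h => by simp [h] at hc
      have h1 : fanGraph.Adj (some c) (some a) := hs.1 hv ha (by simp [hca])
      have h2 : fanGraph.Adj (some a) (some b) := hab'
      have h3 : fanGraph.Adj (some c) (some b) := hs.1 hv hb (by simp [hcb])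
      exact no_three_ints c a b h1 h2 h3
  · rw [hs.card_eq]
    simp [Finset.card_insert_of_notMem, hab]

/-- The triangles of the infinite fan graph `F∞` are exactly the sets
`{none, some i, some (i+1)}` for `i : ℤ`; in particular, every triangle of `F∞`
contains the centre `none`. -/
theorem fanGraph_triangles_classification :
    (∀ s : Finset (Option ℤ),
      fanGraph.IsNClique 3 s ↔ ∃ i : ℤ, s = {none, some i, some (i + 1)}) ∧
    ∀ s : Finset (Option ℤ), fanGraph.IsNClique 3 s → none ∈ s := by
  have key : ∀ s : Finset (Option ℤ),
      fanGraph.IsNClique 3 s ↔ ∃ i : ℤ, s = {none, some i, some (i + 1)} := by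
    intro s
    constructor
    · intro hs
      -- find two distinct some elements
      obtain ⟨x, y, z, hxy, hxz, hyz, hset⟩ := Finset.card_eq_three.mp hs.card_eq
      have hsome : ∃ a b : ℤ, a ≠ b ∧ some a ∈ s ∧ some b ∈ s := by
        subst hset
        match x, y, z, hxy, hxz, hyz with
        | none, none, _, hxy, _, _ => exact absurd rfl hxy
        | none, some b, some c, _, _, hyz =>
            exact ⟨b, c, fun h => hyz (by simp [h]), by simp, by simp⟩
        | some a, none, none, _, _, hyz => exact absurd rfl hyz
        | some a, none, some c, _, hxz, _ =>
            exact ⟨a, c, fun h => hxz (by simp [h]), by simp, by simp⟩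
        | some a, some b, _, hxy, _, _ =>
            exact ⟨a, b, fun h => hxy (by simp [h]), by simp, by simp⟩
      obtain ⟨a, b, hab, ha, hb⟩ := hsome
      have hadj : fanGraph.Adj (some a) (some b) := hs.1 ha hb (by simp [hab])
      have habs : |a - b| = 1 := hadj
      rcases (abs_eq (by norm_num : (0:ℤ) ≤ 1)).mp habs with h | h
      · refine ⟨b, ?_⟩
        rw [pair_form s hs a b ha hb hab]
        have : a = b + 1 := by omega
        subst this
        ext v; simp; tauto
      · refine ⟨a, ?_⟩
        rw [pair_form s hs a b ha hb hab]
        have : b = a + 1 := by omega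
        subst this
        rfl
    · rintro ⟨i, rfl⟩
      constructor
      · rintro x hx y hy hxy
        simp only [Finset.coe_insert, Set.mem_insert_iff, Finset.coe_singleton,
          Finset.mem_coe, Finset.mem_insert, Finset.mem_singleton] at hx hy
        rcases hx with rfl | rfl | rfl <;> rcases hy with rfl | rfl | rfl <;>
          first
          | exact absurd rfl hxy
          | trivial
          | (show |_ - _| = (1:ℤ); simp)
          | (show |_ - _| = (1:ℤ); rw [abs_sub_comm]; simp)
      · rw [Finset.card_insert_of_notMem (by simp),
          Finset.card_insert_of_notMem (by simp), Finset.card_singleton]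
  refine ⟨key, fun s hs => ?_⟩
  obtain ⟨i, rfl⟩ := (key s).mp hs
  simp
end

section
/- The Farey graph 𝔽 is a connected graph. -/
/-- Adjacency relation of the Farey graph on `Option ℚ`: `some x` and `some y` are
adjacent iff `|x.num * y.den - y.num * x.den| = 1`, and `none` (representing `∞`)
is adjacent to `some x` iff `x.den = 1`. -/
def fareyAdj : Option ℚ → Option ℚ → Prop
  | some x, some y => |x.num * (y.den : ℤ) - y.num * (x.den : ℤ)| = 1
  | some x, none => x.den = 1
  | none, some x => x.den = 1
  | none, none => False

/-- The Farey graph `𝔽` on the vertex set `Option ℚ`. -/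
def fareyGraph : SimpleGraph (Option ℚ) where
  Adj := fareyAdj
  symm := by
    constructor
    rintro (_ | x) (_ | y) h
    · exact h.elim
    · exact h
    · exact h
    · show |y.num * (x.den : ℤ) - x.num * (y.den : ℤ)| = 1
      rw [abs_sub_comm]
      exact h
  loopless := by
    constructor
    rintro (_ | x) h
    · exact h.elim
    · have : |x.num * (x.den : ℤ) - x.num * (x.den : ℤ)| = 1 := h
      simp at this

lemma farey_step (x : ℚ) (h2 : 2 ≤ x.den) :
    ∃ y : ℚ, |x.num * (y.den : ℤ) - y.num * (x.den : ℤ)| = 1 ∧ y.den < x.den := by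
  set p : ℤ := x.num
  set q : ℤ := (x.den : ℤ) with hq
  have hq2 : (2:ℤ) ≤ q := by rw [hq]; exact_mod_cast h2
  have hcop : IsCoprime p q := by
    rw [Int.isCoprime_iff_gcd_eq_one]
    exact x.reduced
  obtain ⟨a, b, hab⟩ := hcop
  set s : ℤ := a % q with hs
  have hs0 : 0 ≤ s := Int.emod_nonneg a (by omega)
  have hsq : s < q := Int.emod_lt_of_pos a (by omega)
  set r : ℤ := -(p * (a / q)) - b with hr
  have key : p * s - r * q = 1 := by
    have hmod : s = a - q * (a / q) := Int.emod_def a q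
    rw [hmod, hr]
    nlinarith [hab]
  have hsne : s ≠ 0 := by
    intro h0
    have : q * (-r) = 1 := by rw [h0] at key; linarith
    have := Int.le_of_dvd one_pos ⟨-r, this.symm⟩
    omega
  have hcop2 : Int.gcd s r = 1 := by
    rw [← Int.isCoprime_iff_gcd_eq_one]
    exact ⟨p, -q, by linarith [key]⟩
  have hden_ne : s.toNat ≠ 0 := by omega
  have hred : r.natAbs.Coprime s.toNat := by
    have : s.natAbs = s.toNat := by omega
    rw [← this]
    exact Nat.coprime_comm.mp hcop2
  refine ⟨Rat.mk' r s.toNat hden_ne hred, ?_, ?_⟩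
  · show |p * ((s.toNat : ℤ)) - r * q| = 1
    have : (s.toNat : ℤ) = s := by omega
    rw [this, key]
    decide
  · show s.toNat < x.den
    omega

lemma farey_reach : ∀ n (x : ℚ), x.den = n → fareyGraph.Reachable (some x) none := by
  intro n
  induction n using Nat.strong_induction_on with
  | _ n ih =>
    intro x hx
    rcases Nat.lt_or_ge x.den 2 with h1 | h2
    · have hden : x.den = 1 := by have := x.pos; omega
      exact SimpleGraph.Adj.reachable (show fareyAdj (some x) none from hden)
    · obtain ⟨y, hadj, hlt⟩ := farey_step x h2
      exact (SimpleGraph.Adj.reachable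
        (show fareyAdj (some x) (some y) from hadj)).trans
        (ih y.den (hx ▸ hlt) y rfl)

/-- The Farey graph `𝔽` is connected. -/
theorem fareyGraph_connected : fareyGraph.Connected := by
  rw [SimpleGraph.connected_iff]
  refine ⟨?_, ⟨none⟩⟩
  have key : ∀ v : Option ℚ, fareyGraph.Reachable v none := by
    rintro (_ | x)
    · exact SimpleGraph.Reachable.refl none
    · exact farey_reach x.den x rfl
  intro u v
  exact (key u).trans (key v).symm
end

section
/- Every clique of the Farey graph 𝔽 has at most 3 vertices; that is, there is no set of four pairwise adjacent vertices in 𝔽. -/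
/-- Reduction of a vertex modulo 2: `(num, den)` in `(ZMod 2)²`, with `∞ ↦ (1,0)`. -/
def fVec : Option ℚ → ZMod 2 × ZMod 2
  | none => (1, 0)
  | some x => ((x.num : ZMod 2), (x.den : ZMod 2))

lemma fVec_ne_zero : ∀ v : Option ℚ, fVec v ≠ 0
  | none => by decide
  | some x => by
    intro hx
    have h1 : (x.num : ZMod 2) = 0 := congrArg Prod.fst hx
    have h2 : ((x.den : ℤ) : ZMod 2) = 0 := by
      have : (x.den : ZMod 2) = 0 := congrArg Prod.snd hx
      push_cast
      exact this
    rw [ZMod.intCast_zmod_eq_zero_iff_dvd] at h1 h2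
    have hden : (2 : ℤ) ∣ (x.den : ℤ) := h2
    have hc : Nat.Coprime x.num.natAbs x.den := x.reduced
    have : (2 : ℕ) ∣ Nat.gcd x.num.natAbs x.den :=
      Nat.dvd_gcd (Int.natAbs_dvd_natAbs.mpr h1) (Int.ofNat_dvd.mp (by exact_mod_cast hden))
    rw [hc] at this
    omega

lemma adj_fVec_ne : ∀ a b : Option ℚ, fareyAdj a b → fVec a ≠ fVec b
  | none, none, hab => hab.elim
  | none, some x, hab => by
    intro hx
    have : ((1 : ZMod 2), (0 : ZMod 2)) = ((x.num : ZMod 2), (x.den : ZMod 2)) := hx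
    have h2 : (0 : ZMod 2) = (x.den : ZMod 2) := congrArg Prod.snd this
    rw [show x.den = 1 from hab] at h2
    simp at h2
  | some x, none, hab => by
    intro hx
    have : ((x.num : ZMod 2), (x.den : ZMod 2)) = ((1 : ZMod 2), (0 : ZMod 2)) := hx
    have h2 : (x.den : ZMod 2) = (0 : ZMod 2) := congrArg Prod.snd this
    rw [show x.den = 1 from hab] at h2
    simp at h2
  | some x, some y, hab => by
    intro hx
    have h1 : (x.num : ZMod 2) = (y.num : ZMod 2) := congrArg Prod.fst hx
    have h2 : (x.den : ZMod 2) = (y.den : ZMod 2) := congrArg Prod.snd hx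
    have habs : |x.num * (y.den : ℤ) - y.num * (x.den : ℤ)| = 1 := hab
    have hd : ((x.num * (y.den : ℤ) - y.num * (x.den : ℤ) : ℤ) : ZMod 2) = 0 := by
      push_cast
      rw [h1, h2]
      ring
    rcases abs_eq (by norm_num : (0:ℤ) ≤ 1) |>.mp habs with h | h <;>
      rw [h] at hd <;> simp at hd

lemma mem3 (w : ZMod 2 × ZMod 2) (hw : w ≠ 0) :
    w ∈ ({(0,1),(1,0),(1,1)} : Finset (ZMod 2 × ZMod 2)) := by
  rcases w with ⟨a, b⟩
  fin_cases a <;> fin_cases b <;> simp_all <;> revert hw <;> decide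

/-- Every clique of the Farey graph `𝔽` has at most 3 vertices: there is no set of
four pairwise adjacent vertices in `𝔽`. -/
theorem fareyGraph_clique_le_three (s : Finset (Option ℚ))
    (h : fareyGraph.IsClique (s : Set (Option ℚ))) : s.card ≤ 3 := by
  classical
  have hinj : Set.InjOn fVec (s : Set (Option ℚ)) := by
    intro a ha b hb hab
    by_contra hne
    exact adj_fVec_ne a b (h ha hb hne) hab
  have himg : s.image fVec ⊆ ({(0,1),(1,0),(1,1)} : Finset (ZMod 2 × ZMod 2)) := by
    intro u hu
    obtain ⟨v, hv, rfl⟩ := Finset.mem_image.mp hu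
    exact mem3 _ (fVec_ne_zero v)
  calc s.card = (s.image fVec).card := (Finset.card_image_of_injOn hinj).symm
    _ ≤ ({(0,1),(1,0),(1,1)} : Finset (ZMod 2 × ZMod 2)).card := Finset.card_le_card himg
    _ ≤ 3 := by decide
end

section
/- The Farey dual graph 𝔽* is 3-regular: every vertex of 𝔽* (i.e. every triangle of the Farey graph 𝔽) is adjacent in 𝔽* to exactly three other triangles. -/
/-- A triangle of the Farey graph: a 3-element clique. -/
def FareyTriangle : Type := {s : Finset (Option ℚ) // fareyGraph.IsNClique 3 s}

/-- The Farey dual graph `𝔽*`: vertices are the triangles of the Farey graph, two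
triangles being adjacent iff they are distinct and share exactly two vertices. -/
def fareyDual : SimpleGraph FareyTriangle where
  Adj T T' := T ≠ T' ∧ (T.1 ∩ T'.1).card = 2
  symm := by
    constructor
    rintro T T' ⟨h1, h2⟩
    exact ⟨h1.symm, by rwa [Finset.inter_comm]⟩
  loopless := ⟨fun T h => h.1 rfl⟩

namespace FareyAux

def vnum : Option ℚ → ℤ := fun v => v.elim 1 Rat.num
def vden : Option ℚ → ℤ := fun v => v.elim 0 (fun x => (x.den : ℤ))

@[simp] lemma vnum_none : vnum none = 1 := rfl
@[simp] lemma vden_none : vden none = 0 := rfl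
@[simp] lemma vnum_some (x : ℚ) : vnum (some x) = x.num := rfl
@[simp] lemma vden_some (x : ℚ) : vden (some x) = (x.den : ℤ) := rfl

lemma vden_nonneg (v : Option ℚ) : 0 ≤ vden v := by
  cases v with
  | none => simp
  | some x => simp

lemma vden_eq_zero {v : Option ℚ} (h : vden v = 0) : v = none := by
  cases v with
  | none => rfl
  | some x => simp at h

lemma vcop (v : Option ℚ) : Int.gcd (vnum v) (vden v) = 1 := by
  cases v with
  | none => simp
  | some x => simpa [Int.gcd] using x.reduced

lemma vert_ext {u v : Option ℚ} (h1 : vnum u = vnum v) (h2 : vden u = vden v) : u = v := by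
  cases u with
  | none =>
    cases v with
    | none => rfl
    | some y =>
      rw [vden_none, vden_some] at h2
      exact absurd h2.symm (by exact_mod_cast y.den_nz)
  | some x =>
    cases v with
    | none => simp at h2
    | some y =>
      simp only [vnum_some, vden_some, Nat.cast_inj] at h1 h2
      exact congrArg some (Rat.ext h1 h2)

lemma adj_iff {u v : Option ℚ} :
    fareyGraph.Adj u v ↔ |vnum u * vden v - vnum v * vden u| = 1 := by
  cases u with
  | none =>
    cases v with
    | none => simp [fareyGraph, fareyAdj]
    | some y =>
      show fareyAdj none (some y) ↔ _
      simp only [fareyAdj, vnum_none, vden_none, vnum_some, vden_some, one_mul, mul_zero,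
        sub_zero]
      rw [abs_of_nonneg (by positivity)]
      exact_mod_cast Iff.rfl
  | some x =>
    cases v with
    | none =>
      show fareyAdj (some x) none ↔ _
      simp only [fareyAdj, vnum_none, vden_none, vnum_some, vden_some, mul_zero, one_mul,
        zero_sub, abs_neg]
      rw [abs_of_nonneg (by positivity)]
      exact_mod_cast Iff.rfl
    | some y => exact Iff.rfl

def toVert (x y : ℤ) : Option ℚ := if y = 0 then none else some ((x : ℚ) / (y : ℚ))

def normV (x y : ℤ) : Option ℚ := if 0 ≤ y then toVert x y else toVert (-x) (-y)

lemma toVert_spec {x y : ℤ} (hy : 0 < y) (h : Int.gcd x y = 1) :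
    vnum (toVert x y) = x ∧ vden (toVert x y) = y := by
  have hcop : Nat.Coprime x.natAbs y.natAbs := h
  rw [toVert, if_neg hy.ne']
  exact ⟨Rat.num_div_eq_of_coprime hy hcop, Rat.den_div_eq_of_coprime hy hcop⟩

lemma normV_spec {x y : ℤ} (h : Int.gcd x y = 1) :
    (vnum (normV x y) = x ∧ vden (normV x y) = y) ∨
    (vnum (normV x y) = -x ∧ vden (normV x y) = -y) := by
  rcases lt_trichotomy y 0 with hy | hy | hy
  · right
    have : normV x y = toVert (-x) (-y) := if_neg (not_le.mpr hy)
    rw [this]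
    exact toVert_spec (by omega) (by rwa [Int.gcd, Int.natAbs_neg, Int.natAbs_neg])
  · subst hy
    have hx : x = 1 ∨ x = -1 := by
      have := h; simp [Int.gcd] at this; omega
    have hnv : normV x 0 = none := by simp [normV, toVert]
    rcases hx with rfl | rfl
    · left; simp [hnv]
    · right; simp [hnv]
  · left
    have : normV x y = toVert x y := if_pos hy.le
    rw [this]
    exact toVert_spec hy h

lemma normV_key {x y : ℤ} (h : Int.gcd x y = 1) (a b : ℤ) :
    |vnum (normV x y) * b - a * vden (normV x y)| = |x * b - a * y| := by
  rcases normV_spec h with ⟨h1, h2⟩ | ⟨h1, h2⟩ <;> rw [h1, h2]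
  rw [← abs_neg]; ring_nf

lemma eq_normV {w : Option ℚ} {x y : ℤ} (h : Int.gcd x y = 1)
    (hc : (vnum w = x ∧ vden w = y) ∨ (vnum w = -x ∧ vden w = -y)) : w = normV x y := by
  rcases normV_spec h with ⟨h1, h2⟩ | ⟨h1, h2⟩ <;> rcases hc with ⟨h3, h4⟩ | ⟨h3, h4⟩
  · exact vert_ext (h3.trans h1.symm) (h4.trans h2.symm)
  · have hy : y = 0 := by
      have := vden_nonneg w; have := vden_nonneg (normV x y); omega
    subst hy
    rw [vden_eq_zero (by omega : vden w = 0), vden_eq_zero (by omega : vden (normV x 0) = 0)]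
  · have hy : y = 0 := by
      have := vden_nonneg w; have := vden_nonneg (normV x y); omega
    subst hy
    rw [vden_eq_zero (by omega : vden w = 0), vden_eq_zero (by omega : vden (normV x 0) = 0)]
  · exact vert_ext (by omega) (by omega)

lemma solve {p q r s X Y : ℤ} (hD : |p * s - r * q| = 1) (hA : |p * Y - X * q| = 1)
    (hB : |r * Y - X * s| = 1) :
    ((X = p + r ∧ Y = q + s) ∨ (X = -(p + r) ∧ Y = -(q + s))) ∨
    ((X = p - r ∧ Y = q - s) ∨ (X = -(p - r) ∧ Y = -(q - s))) := by
  have hX : X * (p * s - r * q) = r * (p * Y - X * q) - p * (r * Y - X * s) := by ring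
  have hY : Y * (p * s - r * q) = s * (p * Y - X * q) - q * (r * Y - X * s) := by ring
  have one : (0:ℤ) ≤ 1 := by norm_num
  rcases (abs_eq one).mp hD with h1 | h1 <;> rcases (abs_eq one).mp hA with h2 | h2 <;>
    rcases (abs_eq one).mp hB with h3 | h3 <;> rw [h1, h2, h3] at hX hY <;> omega

end FareyAux

namespace FareyAux2
open FareyAux

lemma gcd_sum {p q r s : ℤ} (hD : |p * s - r * q| = 1) : Int.gcd (p + r) (q + s) = 1 := by
  rw [← Int.isCoprime_iff_gcd_eq_one]
  rcases (abs_eq (by norm_num : (0:ℤ) ≤ 1)).mp hD with h | h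
  · exact ⟨s, -r, by linarith [h]⟩
  · exact ⟨-s, r, by linarith [h]⟩

lemma gcd_diff {p q r s : ℤ} (hD : |p * s - r * q| = 1) : Int.gcd (p - r) (q - s) = 1 := by
  rw [← Int.isCoprime_iff_gcd_eq_one]
  rcases (abs_eq (by norm_num : (0:ℤ) ≤ 1)).mp hD with h | h
  · exact ⟨s, -r, by linarith [h]⟩
  · exact ⟨-s, r, by linarith [h]⟩

lemma common_pair {u v : Option ℚ} (h : fareyGraph.Adj u v) :
    ∃ w1 w2 : Option ℚ, w1 ≠ w2 ∧
      ∀ w, (fareyGraph.Adj u w ∧ fareyGraph.Adj v w) ↔ (w = w1 ∨ w = w2) := by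
  have hD : |vnum u * vden v - vnum v * vden u| = 1 := adj_iff.mp h
  set p := vnum u with hp
  set q := vden u with hq
  set r := vnum v with hr
  set s := vden v with hs
  have hc1 : Int.gcd (p + r) (q + s) = 1 := gcd_sum hD
  have hc2 : Int.gcd (p - r) (q - s) = 1 := gcd_diff hD
  refine ⟨normV (p + r) (q + s), normV (p - r) (q - s), ?_, ?_⟩
  · intro heq
    have h1 := normV_spec hc1
    have h2 := normV_spec hc2
    rw [heq] at h1
    have hu := vcop u
    have hv := vcop v
    rw [← hp, ← hq] at hu
    rw [← hr, ← hs] at hv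
    rcases h1 with ⟨e1, e2⟩ | ⟨e1, e2⟩ <;> rcases h2 with ⟨e3, e4⟩ | ⟨e3, e4⟩ <;>
      [ (have : r = 0 ∧ s = 0 := by omega);
        (have : p = 0 ∧ q = 0 := by omega);
        (have : p = 0 ∧ q = 0 := by omega);
        (have : r = 0 ∧ s = 0 := by omega)]
    · rw [this.1, this.2] at hv; simp [Int.gcd] at hv
    · rw [this.1, this.2] at hu; simp [Int.gcd] at hu
    · rw [this.1, this.2] at hu; simp [Int.gcd] at hu
    · rw [this.1, this.2] at hv; simp [Int.gcd] at hv
  · intro w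
    constructor
    · rintro ⟨h1, h2⟩
      have hA : |p * vden w - vnum w * q| = 1 := adj_iff.mp h1
      have hB : |r * vden w - vnum w * s| = 1 := adj_iff.mp h2
      rcases solve hD hA hB with (⟨hx, hy⟩ | ⟨hx, hy⟩) | (⟨hx, hy⟩ | ⟨hx, hy⟩)
      · exact Or.inl (eq_normV hc1 (Or.inl ⟨hx, hy⟩))
      · exact Or.inl (eq_normV hc1 (Or.inr ⟨by omega, by omega⟩))
      · exact Or.inr (eq_normV hc2 (Or.inl ⟨hx, hy⟩))
      · exact Or.inr (eq_normV hc2 (Or.inr ⟨by omega, by omega⟩))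
    · rintro (rfl | rfl)
      · constructor
        · rw [adj_iff, abs_sub_comm, normV_key hc1]
          have : (p + r) * q - p * (q + s) = -(p * s - r * q) := by ring
          rw [this, abs_neg]; exact hD
        · rw [adj_iff, abs_sub_comm, normV_key hc1]
          have : (p + r) * s - r * (q + s) = p * s - r * q := by ring
          rw [this]; exact hD
      · constructor
        · rw [adj_iff, abs_sub_comm, normV_key hc2]
          have : (p - r) * q - p * (q - s) = p * s - r * q := by ring
          rw [this]; exact hD
        · rw [adj_iff, abs_sub_comm, normV_key hc2]
          have : (p - r) * s - r * (q - s) = p * s - r * q := by ring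
          rw [this]; exact hD

lemma exists_unique_other {a b c : Option ℚ} (hab : fareyGraph.Adj a b)
    (hac : fareyGraph.Adj a c) (hbc : fareyGraph.Adj b c) :
    ∃! w, fareyGraph.Adj a w ∧ fareyGraph.Adj b w ∧ w ≠ c := by
  obtain ⟨w1, w2, hne, hiff⟩ := common_pair hab
  have hc : c = w1 ∨ c = w2 := (hiff c).mp ⟨hac, hbc⟩
  rcases hc with rfl | rfl
  · obtain ⟨h1, h2⟩ := (hiff w2).mpr (Or.inr rfl)
    refine ⟨w2, ⟨h1, h2, hne.symm⟩, ?_⟩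
    rintro y ⟨hy1, hy2, hy3⟩
    rcases (hiff y).mp ⟨hy1, hy2⟩ with rfl | rfl
    · exact absurd rfl hy3
    · rfl
  · obtain ⟨h1, h2⟩ := (hiff w1).mpr (Or.inl rfl)
    refine ⟨w1, ⟨h1, h2, hne⟩, ?_⟩
    rintro y ⟨hy1, hy2, hy3⟩
    rcases (hiff y).mp ⟨hy1, hy2⟩ with rfl | rfl
    · rfl
    · exact absurd rfl hy3

end FareyAux2


namespace FareyAux3
open FareyAux FareyAux2

lemma inter_tri {α : Type*} [DecidableEq α] {x y z w : α} (hzx : z ≠ x) (hzy : z ≠ y)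
    (hwx : w ≠ x) (hwy : w ≠ y) (hwz : w ≠ z) :
    ({x, y, z} : Finset α) ∩ {x, y, w} = {x, y} := by
  ext t
  simp only [Finset.mem_inter, Finset.mem_insert, Finset.mem_singleton]
  constructor
  · rintro ⟨rfl | rfl | rfl, h2 | h2 | h2⟩ <;> simp_all
  · rintro (rfl | rfl) <;> simp

lemma tri_eq {T T' : FareyTriangle} (hne : T ≠ T') {x y z w : Option ℚ}
    (hxy : x ≠ y) (hT : T.1 = {x, y, z})
    (hI : T.1 ∩ T'.1 = {x, y})
    (hw : ∀ w', fareyGraph.Adj x w' ∧ fareyGraph.Adj y w' ∧ w' ≠ z → w' = w) :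
    T'.1 = {x, y, w} := by
  have hsub : ({x, y} : Finset (Option ℚ)) ⊆ T'.1 := by
    rw [← hI]; exact Finset.inter_subset_right
  have hc3 : T'.1.card = 3 := T'.2.2
  have hc2 : ({x, y} : Finset (Option ℚ)).card = 2 := Finset.card_pair hxy
  have hcs : (T'.1 \ {x, y}).card = 1 := by
    rw [Finset.card_sdiff_of_subset hsub, hc3, hc2]
  obtain ⟨u, hu⟩ := Finset.card_eq_one.mp hcs
  have hT' : T'.1 = {x, y, u} := by
    have h1 := Finset.sdiff_union_of_subset hsub
    rw [hu] at h1
    rw [← h1]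
    ext t
    simp only [Finset.mem_union, Finset.mem_singleton, Finset.mem_insert]
    tauto
  have humem : u ∈ T'.1 := by rw [hT']; simp
  have hux : u ≠ x := by
    intro h; have : u ∈ T'.1 \ ({x, y} : Finset (Option ℚ)) := by rw [hu]; simp
    rw [Finset.mem_sdiff] at this; exact this.2 (by simp [h])
  have huy : u ≠ y := by
    intro h; have : u ∈ T'.1 \ ({x, y} : Finset (Option ℚ)) := by rw [hu]; simp
    rw [Finset.mem_sdiff] at this; exact this.2 (by simp [h])
  have hxu : fareyGraph.Adj x u :=
    T'.2.1 (Finset.mem_coe.mpr (hsub (by simp))) (Finset.mem_coe.mpr humem) (Ne.symm hux)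
  have hyu : fareyGraph.Adj y u :=
    T'.2.1 (Finset.mem_coe.mpr (hsub (by simp))) (Finset.mem_coe.mpr humem) (Ne.symm huy)
  have huz : u ≠ z := by
    rintro rfl
    exact hne (Subtype.ext (hT.trans hT'.symm))
  rw [hT', hw u ⟨hxu, hyu, huz⟩]

theorem three_regular_aux (T : FareyTriangle) :
    (fareyDual.neighborSet T).ncard = 3 := by
  classical
  obtain ⟨a, b, c, hab, hac, hbc, hT⟩ := SimpleGraph.is3Clique_iff.mp T.2
  have hab' : a ≠ b := fareyGraph.ne_of_adj hab
  have hac' : a ≠ c := fareyGraph.ne_of_adj hac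
  have hbc' : b ≠ c := fareyGraph.ne_of_adj hbc
  obtain ⟨w1, ⟨hw1a, hw1b, hw1c⟩, hu1⟩ := exists_unique_other hab hac hbc
  obtain ⟨w2, ⟨hw2a, hw2c, hw2b⟩, hu2⟩ := exists_unique_other hac hab hbc.symm
  obtain ⟨w3, ⟨hw3b, hw3c, hw3a⟩, hu3⟩ := exists_unique_other hbc hab.symm hac.symm
  have hw1a' : w1 ≠ a := (fareyGraph.ne_of_adj hw1a).symm
  have hw1b' : w1 ≠ b := (fareyGraph.ne_of_adj hw1b).symm
  have hw2a' : w2 ≠ a := (fareyGraph.ne_of_adj hw2a).symm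
  have hw2c' : w2 ≠ c := (fareyGraph.ne_of_adj hw2c).symm
  have hw3b' : w3 ≠ b := (fareyGraph.ne_of_adj hw3b).symm
  have hw3c' : w3 ≠ c := (fareyGraph.ne_of_adj hw3c).symm
  have hT1 : fareyGraph.IsNClique 3 {a, b, w1} :=
    SimpleGraph.is3Clique_triple_iff.mpr ⟨hab, hw1a, hw1b⟩
  have hT2 : fareyGraph.IsNClique 3 {a, c, w2} :=
    SimpleGraph.is3Clique_triple_iff.mpr ⟨hac, hw2a, hw2c⟩
  have hT3 : fareyGraph.IsNClique 3 {b, c, w3} :=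
    SimpleGraph.is3Clique_triple_iff.mpr ⟨hbc, hw3b, hw3c⟩
  set T1 : FareyTriangle := ⟨{a, b, w1}, hT1⟩ with hT1def
  set T2 : FareyTriangle := ⟨{a, c, w2}, hT2⟩ with hT2def
  set T3 : FareyTriangle := ⟨{b, c, w3}, hT3⟩ with hT3def
  -- alternative forms of hT
  have hTacb : T.1 = {a, c, b} := by rw [hT, Finset.pair_comm b c]
  have hTbca : T.1 = {b, c, a} := by
    rw [hT]; ext t
    simp only [Finset.mem_insert, Finset.mem_singleton]; tauto
  have hset : fareyDual.neighborSet T = {T1, T2, T3} := by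
    ext T'
    simp only [SimpleGraph.mem_neighborSet, Set.mem_insert_iff, Set.mem_singleton_iff]
    constructor
    · rintro ⟨hne, hcard⟩
      obtain ⟨x, y, hxy, hI⟩ := Finset.card_eq_two.mp hcard
      have hxm : x ∈ T.1 := by
        have : x ∈ T.1 ∩ T'.1 := by rw [hI]; simp
        exact (Finset.mem_inter.mp this).1
      have hym : y ∈ T.1 := by
        have : y ∈ T.1 ∩ T'.1 := by rw [hI]; simp
        exact (Finset.mem_inter.mp this).1
      rw [hT] at hxm hym
      simp only [Finset.mem_insert, Finset.mem_singleton] at hxm hym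
      rcases hxm with rfl | rfl | rfl <;> rcases hym with rfl | rfl | rfl
      · exact absurd rfl hxy
      · -- {a, b} → T1
        left
        exact Subtype.ext ((tri_eq hne hab' hT hI (fun w' ⟨h1, h2, h3⟩ => hu1 w' ⟨h1, h2, h3⟩)))
      · -- {a, c} → T2
        right; left
        exact Subtype.ext ((tri_eq hne hac' hTacb hI (fun w' ⟨h1, h2, h3⟩ => hu2 w' ⟨h1, h2, h3⟩)))
      · -- {b, a} → T1
        left
        rw [Finset.pair_comm] at hI
        exact Subtype.ext ((tri_eq hne hab' hT hI (fun w' ⟨h1, h2, h3⟩ => hu1 w' ⟨h1, h2, h3⟩)))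
      · exact absurd rfl hxy
      · -- {b, c} → T3
        right; right
        exact Subtype.ext ((tri_eq hne hbc' hTbca hI (fun w' ⟨h1, h2, h3⟩ => hu3 w' ⟨h1, h2, h3⟩)))
      · -- {c, a} → T2
        right; left
        rw [Finset.pair_comm] at hI
        exact Subtype.ext ((tri_eq hne hac' hTacb hI (fun w' ⟨h1, h2, h3⟩ => hu2 w' ⟨h1, h2, h3⟩)))
      · -- {c, b} → T3
        right; right
        rw [Finset.pair_comm] at hI
        exact Subtype.ext ((tri_eq hne hbc' hTbca hI (fun w' ⟨h1, h2, h3⟩ => hu3 w' ⟨h1, h2, h3⟩)))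
      · exact absurd rfl hxy
    · have key : ∀ (x y z w : Option ℚ) (h : fareyGraph.IsNClique 3 {x, y, w}),
          x ≠ y → T.1 = {x, y, z} → z ≠ x → z ≠ y → w ≠ x → w ≠ y → w ≠ z →
          fareyDual.Adj T ⟨{x, y, w}, h⟩ := by
        intro x y z w h hxy hTxyz hzx hzy hwx hwy hwz
        constructor
        · intro heq
          have h2 : T.1 = ({x, y, w} : Finset (Option ℚ)) := congrArg Subtype.val heq
          rw [hTxyz] at h2
          have : z ∈ ({x, y, w} : Finset (Option ℚ)) := by rw [← h2]; simp
          simp only [Finset.mem_insert, Finset.mem_singleton] at this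
          tauto
        · show (T.1 ∩ ({x, y, w} : Finset (Option ℚ))).card = 2
          rw [hTxyz, inter_tri hzx hzy hwx hwy hwz]
          exact Finset.card_pair hxy
      rintro (rfl | rfl | rfl)
      · exact key a b c w1 hT1 hab' hT hac'.symm hbc'.symm hw1a' hw1b' hw1c
      · exact key a c b w2 hT2 hac' hTacb hab'.symm hbc' hw2a' hw2c' hw2b
      · exact key b c a w3 hT3 hbc' hTbca hab' hac' hw3b' hw3c' hw3a
  rw [hset]
  rw [Set.ncard_eq_three]
  refine ⟨T1, T2, T3, ?_, ?_, ?_, rfl⟩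
  · intro h
    have h2 : ({a, b, w1} : Finset (Option ℚ)) = {a, c, w2} := congrArg Subtype.val h
    have : b ∈ ({a, c, w2} : Finset (Option ℚ)) := by rw [← h2]; simp
    simp only [Finset.mem_insert, Finset.mem_singleton] at this
    rcases this with h | h | h
    · exact hab' h.symm
    · exact hbc' h
    · exact hw2b h.symm
  · intro h
    have h2 : ({a, b, w1} : Finset (Option ℚ)) = {b, c, w3} := congrArg Subtype.val h
    have : a ∈ ({b, c, w3} : Finset (Option ℚ)) := by rw [← h2]; simp
    simp only [Finset.mem_insert, Finset.mem_singleton] at this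
    rcases this with h | h | h
    · exact hab' h
    · exact hac' h
    · exact hw3a h.symm
  · intro h
    have h2 : ({a, c, w2} : Finset (Option ℚ)) = {b, c, w3} := congrArg Subtype.val h
    have : a ∈ ({b, c, w3} : Finset (Option ℚ)) := by rw [← h2]; simp
    simp only [Finset.mem_insert, Finset.mem_singleton] at this
    rcases this with h | h | h
    · exact hab' h
    · exact hac' h
    · exact hw3a h.symm

end FareyAux3

/-- The Farey dual graph `𝔽*` is 3-regular: every triangle of the Farey graph is
adjacent in `𝔽*` to exactly three other triangles. -/
theorem fareyDual_three_regular (T : FareyTriangle) :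
    (fareyDual.neighborSet T).ncard = 3 :=
  FareyAux3.three_regular_aux T
end

section
/- The Farey dual graph 𝔽* is a tree: it is connected and contains no cycles. -/
namespace FT

def vec : Option ℚ → ℤ × ℤ
  | none => (1, 0)
  | some x => (x.num, (x.den : ℤ))

def dt (u w : ℤ × ℤ) : ℤ := u.1 * w.2 - w.1 * u.2

def Prim (u : ℤ × ℤ) : Prop := Nat.Coprime u.1.natAbs u.2.natAbs

def ovtx (u : ℤ × ℤ) : Option ℚ := if u.2 = 0 then none else some ((u.1 : ℚ) / (u.2 : ℚ))

lemma vec_snd_nonneg (x : Option ℚ) : 0 ≤ (vec x).2 := by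
  cases x <;> simp [vec]

lemma vec_snd_eq_zero {x : Option ℚ} : (vec x).2 = 0 ↔ x = none := by
  cases x with
  | none => simp [vec]
  | some q => simp [vec, q.den_nz]

lemma vec_injective : Function.Injective vec := by
  rintro (_ | x) (_ | y) h
  · rfl
  · exact absurd (by simpa [vec] using congrArg Prod.snd h.symm) y.den_nz
  · exact absurd (by simpa [vec] using congrArg Prod.snd h) x.den_nz
  · have h1 : x.num = y.num := congrArg Prod.fst h
    have h2 : (x.den : ℤ) = (y.den : ℤ) := congrArg Prod.snd h
    exact congrArg some (Rat.ext h1 (by exact_mod_cast h2))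

lemma adj_iff {a b : Option ℚ} : fareyGraph.Adj a b ↔ |dt (vec a) (vec b)| = 1 := by
  cases a with
  | none => cases b with
    | none => simp [fareyGraph, fareyAdj, vec, dt]
    | some y =>
        show fareyAdj none (some y) ↔ _
        simp only [fareyAdj, vec, dt]
        constructor
        · intro h; simp [h]
        · intro h
          have : |(y.den : ℤ)| = 1 := by simpa using h
          rcases abs_eq (by norm_num : (0:ℤ) ≤ 1) |>.mp this with h' | h'
          · exact_mod_cast h'
          · exact absurd h' (by have := y.pos; omega)
  | some x => cases b with
    | none =>
        show fareyAdj (some x) none ↔ _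
        simp only [fareyAdj, vec, dt]
        constructor
        · intro h; simp [h]
        · intro h
          have : |(x.den : ℤ)| = 1 := by simpa using h
          rcases abs_eq (by norm_num : (0:ℤ) ≤ 1) |>.mp this with h' | h'
          · exact_mod_cast h'
          · exact absurd h' (by have := x.pos; omega)
    | some y => exact Iff.rfl

lemma prim_of_det {u w : ℤ × ℤ} (h : |dt u w| = 1) : Prim u := by
  have h' : dt u w = 1 ∨ dt u w = -1 := abs_eq (by norm_num : (0:ℤ) ≤ 1) |>.mp h
  have : IsCoprime u.1 u.2 := by
    rcases h' with h' | h'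
    · exact ⟨w.2, -w.1, by simp only [dt] at h'; linear_combination h'⟩
    · exact ⟨-w.2, w.1, by simp only [dt] at h'; linear_combination -h'⟩
  exact Int.isCoprime_iff_gcd_eq_one.mp this

lemma vec_prim (x : Option ℚ) : Prim (vec x) := by
  cases x with
  | none => simp [Prim, vec]
  | some q => exact q.reduced

lemma vec_ovtx_pos {u : ℤ × ℤ} (hp : Prim u) (h : 0 < u.2) : vec (ovtx u) = u := by
  rw [ovtx, if_neg h.ne']
  have h1 := Rat.num_div_eq_of_coprime h hp
  have h2 := Rat.den_div_eq_of_coprime h hp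
  show (_, _) = u
  ext
  · simpa using h1
  · simpa using h2

lemma vec_ovtx {u : ℤ × ℤ} (hp : Prim u) : vec (ovtx u) = u ∨ vec (ovtx u) = -u := by
  rcases lt_trichotomy u.2 0 with h | h | h
  · right
    have hp' : Prim (-u) := by simpa [Prim, Int.natAbs_neg] using hp
    have : ovtx u = ovtx (-u) := by
      rw [ovtx, ovtx, if_neg h.ne, if_neg (by simpa using h.ne : (-u).2 ≠ 0)]
      congr 1
      show ((u.1 : ℚ)) / u.2 = ((-u.1 : ℤ) : ℚ) / ((-u.2 : ℤ) : ℚ)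
      push_cast
      rw [neg_div_neg_eq]
    rw [this, vec_ovtx_pos hp' (by simpa using h)]
  · have hu1 : u.1.natAbs = 1 := by
      have := hp
      simp [Prim, h] at this
      simpa [Nat.coprime_zero_right] using this
    have : u.1 = 1 ∨ u.1 = -1 := Int.natAbs_eq_iff.mp hu1 |>.imp id (by simp)
    rw [ovtx, if_pos h]
    rcases this with h1 | h1
    · left; show (1, 0) = u; ext <;> simp [h1.symm, h.symm]
    · right; show (1, 0) = -u; ext <;> simp [h1, h]
  · exact Or.inl (vec_ovtx_pos hp h)

lemma dt_swap (u w : ℤ × ℤ) : dt w u = -dt u w := by simp only [dt]; ring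

lemma abs_dt_swap (u w : ℤ × ℤ) : |dt w u| = |dt u w| := by rw [dt_swap, abs_neg]

lemma dt_neg_left (u w : ℤ × ℤ) : dt (-u) w = -dt u w := by simp only [dt, Prod.fst_neg, Prod.snd_neg]; ring

lemma adj_ovtx {u : ℤ × ℤ} (hp : Prim u) (x : Option ℚ) :
    fareyGraph.Adj (ovtx u) x ↔ |dt u (vec x)| = 1 := by
  rw [adj_iff]
  rcases vec_ovtx hp with h | h <;> rw [h]
  rw [dt_neg_left, abs_neg]

lemma cramer {u v w : ℤ × ℤ} (huv : |dt u v| = 1) :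
    w = (dt w v * dt u v) • u + (dt u w * dt u v) • v := by
  have h2 : dt u v * dt u v = 1 := by
    rcases abs_eq (by norm_num : (0:ℤ) ≤ 1) |>.mp huv with h | h <;> rw [h] <;> ring
  have e1 : dt u v * w.1 = dt w v * u.1 + dt u w * v.1 := by simp only [dt]; ring
  have e2 : dt u v * w.2 = dt w v * u.2 + dt u w * v.2 := by simp only [dt]; ring
  have g1 : w.1 = dt w v * dt u v * u.1 + dt u w * dt u v * v.1 := by
    linear_combination (dt u v) * e1 - w.1 * h2
  have g2 : w.2 = dt w v * dt u v * u.2 + dt u w * dt u v * v.2 := by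
    linear_combination (dt u v) * e2 - w.2 * h2
  ext <;> simpa using (by assumption)

/-- In a 3-clique, up to relabeling one vector is the sum of the two others. -/
lemma clique_struct {a b c : Option ℚ} (hab : fareyGraph.Adj a b) (hac : fareyGraph.Adj a c)
    (hbc : fareyGraph.Adj b c) :
    vec c = vec a + vec b ∨ vec a = vec b + vec c ∨ vec b = vec a + vec c := by
  have dab := adj_iff.mp hab
  have dac := adj_iff.mp hac
  have dbc := adj_iff.mp hbc
  have hcr := cramer (w := vec c) dab
  set α := dt (vec c) (vec b) * dt (vec a) (vec b) with hα
  set β := dt (vec a) (vec c) * dt (vec a) (vec b) with hβ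
  have hαv : α = 1 ∨ α = -1 := by
    have : |α| = 1 := by rw [hα, abs_mul, abs_dt_swap, dbc, dab]; ring
    exact abs_eq (by norm_num : (0:ℤ) ≤ 1) |>.mp this
  have hβv : β = 1 ∨ β = -1 := by
    have : |β| = 1 := by rw [hβ, abs_mul, dac, dab]; ring
    exact abs_eq (by norm_num : (0:ℤ) ≤ 1) |>.mp this
  clear_value α β
  rcases hαv with h1 | h1 <;> rcases hβv with h2 | h2 <;> rw [h1, h2] at hcr <;>
      simp only [one_smul, neg_one_smul, neg_smul] at hcr
  · exact Or.inl hcr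
  · refine Or.inr (Or.inl ?_); rw [hcr]; abel
  · refine Or.inr (Or.inr ?_); rw [hcr]; abel
  · exfalso
    have h2c := congrArg Prod.snd hcr
    simp only [Prod.snd_add, Prod.snd_neg] at h2c
    have na := vec_snd_nonneg a
    have nb := vec_snd_nonneg b
    have nc := vec_snd_nonneg c
    have ha0 : (vec a).2 = 0 := by omega
    have hb0 : (vec b).2 = 0 := by omega
    exact hab.ne (vec_snd_eq_zero.mp ha0 ▸ vec_snd_eq_zero.mp hb0 ▸ rfl)

lemma dt_add_right (u v : ℤ × ℤ) : dt u (u + v) = dt u v := by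
  simp only [dt, Prod.fst_add, Prod.snd_add]; ring

lemma dt_right_add (u v : ℤ × ℤ) : dt v (u + v) = dt v u := by
  simp only [dt, Prod.fst_add, Prod.snd_add]; ring

lemma adj_of_sum {a b c : Option ℚ} (hab : fareyGraph.Adj a b) (hc : vec c = vec a + vec b) :
    fareyGraph.Adj a c ∧ fareyGraph.Adj b c := by
  have dab := adj_iff.mp hab
  constructor
  · rw [adj_iff, hc, dt_add_right]; exact dab
  · rw [adj_iff, hc, dt_right_add, abs_dt_swap]; exact dab

lemma tri_struct (T : FareyTriangle) :
    ∃ a b c, T.1 = {a, b, c} ∧ fareyGraph.Adj a b ∧ vec c = vec a + vec b := by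
  obtain ⟨a, b, c, hab, hac, hbc, hT⟩ := Finset.card_eq_three.mp T.2.2
  have ha : a ∈ (T.1 : Set (Option ℚ)) := by rw [hT]; simp
  have hb : b ∈ (T.1 : Set (Option ℚ)) := by rw [hT]; simp
  have hc : c ∈ (T.1 : Set (Option ℚ)) := by rw [hT]; simp
  have Aab : fareyGraph.Adj a b := T.2.1 ha hb hab
  have Aac : fareyGraph.Adj a c := T.2.1 ha hc hac
  have Abc : fareyGraph.Adj b c := T.2.1 hb hc hbc
  rcases clique_struct Aab Aac Abc with h | h | h
  · exact ⟨a, b, c, hT, Aab, h⟩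
  · exact ⟨b, c, a, by rw [hT]; ext x; simp; tauto, Abc, h⟩
  · exact ⟨a, c, b, by rw [hT]; ext x; simp; tauto, Aac, h⟩

lemma common_nbr {a b x : Option ℚ} (hab : fareyGraph.Adj a b) (hxa : fareyGraph.Adj a x)
    (hxb : fareyGraph.Adj b x) :
    vec x = vec a + vec b ∨ vec x = vec a - vec b ∨ vec x = vec b - vec a := by
  rcases clique_struct hab hxa hxb with h | h | h
  · exact Or.inl h
  · exact Or.inr (Or.inl (by rw [h]; abel))
  · exact Or.inr (Or.inr (by rw [h]; abel))

lemma vec_ne_neg (z b : Option ℚ) : vec z ≠ -vec b := by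
  intro h
  have h2 := congrArg Prod.snd h
  simp only [Prod.snd_neg] at h2
  have nz := vec_snd_nonneg z
  have nb := vec_snd_nonneg b
  have hb0 : (vec b).2 = 0 := by omega
  have hz0 : (vec z).2 = 0 := by omega
  rw [vec_snd_eq_zero.mp hb0] at h
  rw [vec_snd_eq_zero.mp hz0] at h
  exact absurd (congrArg Prod.fst h) (by simp [vec])

lemma pair_cases {s : Finset (Option ℚ)} {a b c : Option ℚ} (hsub : s ⊆ {a, b, c})
    (h2 : s.card = 2) : s = {a, b} ∨ s = {a, c} ∨ s = {b, c} := by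
  obtain ⟨x, y, hxy, rfl⟩ := Finset.card_eq_two.mp h2
  have hx : x = a ∨ x = b ∨ x = c := by
    have := hsub (Finset.mem_insert_self x {y}); simpa using this
  have hy : y = a ∨ y = b ∨ y = c := by
    have := hsub (by simp : y ∈ ({x, y} : Finset (Option ℚ))); simpa using this
  rcases hx with rfl | rfl | rfl <;> rcases hy with rfl | rfl | rfl <;>
    simp_all [Finset.pair_comm]

lemma third_elem {t : Finset (Option ℚ)} {x y : Option ℚ} (ht : t.card = 3) (hxy : x ≠ y)
    (hx : x ∈ t) (hy : y ∈ t) : ∃ z, z ∉ ({x, y} : Finset (Option ℚ)) ∧ t = {x, y, z} := by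
  have hsub : ({x, y} : Finset (Option ℚ)) ⊆ t := by
    intro u hu; simp at hu; rcases hu with rfl | rfl <;> assumption
  have hcs : (t \ {x, y}).card = 1 := by
    rw [Finset.card_sdiff_of_subset hsub, ht, Finset.card_pair hxy]
  obtain ⟨z, hz⟩ := Finset.card_eq_one.mp hcs
  have hzmem : z ∈ t \ ({x, y} : Finset (Option ℚ)) := hz ▸ Finset.mem_singleton_self z
  refine ⟨z, (Finset.mem_sdiff.mp hzmem).2, ?_⟩
  have := Finset.union_sdiff_of_subset hsub
  rw [hz] at this
  rw [← this]
  ext u; simp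

lemma nbr_struct {T T' : FareyTriangle} {a b c : Option ℚ} (hT : T.1 = {a, b, c})
    (hab : fareyGraph.Adj a b) (hc : vec c = vec a + vec b) (hAdj : fareyDual.Adj T T') :
    (∃ x, T'.1 = {a, b, x} ∧ (vec x = vec a - vec b ∨ vec x = vec b - vec a)) ∨
    (∃ x, T'.1 = {a, c, x} ∧ vec x = vec a + vec c) ∨
    (∃ x, T'.1 = {b, c, x} ∧ vec x = vec b + vec c) := by
  obtain ⟨Aac, Abc⟩ := adj_of_sum hab hc
  obtain ⟨hne, hcard2⟩ : T ≠ T' ∧ (T.1 ∩ T'.1).card = 2 := hAdj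
  have hsub : T.1 ∩ T'.1 ⊆ ({a, b, c} : Finset (Option ℚ)) := by
    rw [← hT]; exact Finset.inter_subset_left
  have hmem : ∀ u : Option ℚ, u ∈ T.1 ∩ T'.1 → u ∈ T'.1 := fun u hu =>
    (Finset.mem_inter.mp hu).2
  have hzT : ∀ z : Option ℚ, z ∈ T'.1 → z ∉ T.1 ∩ T'.1 → z ∉ T.1 := by
    intro z h1 h2 h3; exact h2 (Finset.mem_inter.mpr ⟨h3, h1⟩)
  have hclique := T'.2.1
  have hcard3 := T'.2.2
  rcases pair_cases hsub hcard2 with hp | hp | hp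
  · -- pair {a, b}
    have haT' : a ∈ T'.1 := hmem a (hp ▸ by simp)
    have hbT' : b ∈ T'.1 := hmem b (hp ▸ by simp)
    obtain ⟨z, hzp, hT'⟩ := third_elem hcard3 hab.ne haT' hbT'
    have hzTm : z ∉ T.1 := hzT z (hT' ▸ by simp) (hp ▸ hzp)
    have hza : z ≠ a := by rintro rfl; simp at hzp
    have hzb : z ≠ b := by rintro rfl; simp at hzp
    have Aaz : fareyGraph.Adj a z := hclique (by rw [hT']; simp) (by rw [hT']; simp) hza.symm
    have Abz : fareyGraph.Adj b z := hclique (by rw [hT']; simp) (by rw [hT']; simp) hzb.symm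
    rcases common_nbr hab Aaz Abz with h | h
    · exfalso; rw [← hc] at h; exact hzTm (by rw [hT, vec_injective h]; simp)
    · exact Or.inl ⟨z, hT', h⟩
  · -- pair {a, c}
    have haT' : a ∈ T'.1 := hmem a (hp ▸ by simp)
    have hcT' : c ∈ T'.1 := hmem c (hp ▸ by simp)
    obtain ⟨z, hzp, hT'⟩ := third_elem hcard3 Aac.ne haT' hcT'
    have hzTm : z ∉ T.1 := hzT z (hT' ▸ by simp) (hp ▸ hzp)
    have hza : z ≠ a := by rintro rfl; simp at hzp
    have hzc : z ≠ c := by rintro rfl; simp at hzp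
    have Aaz : fareyGraph.Adj a z := hclique (by rw [hT']; simp) (by rw [hT']; simp) hza.symm
    have Acz : fareyGraph.Adj c z := hclique (by rw [hT']; simp) (by rw [hT']; simp) hzc.symm
    rcases common_nbr Aac Aaz Acz with h | h | h
    · exact Or.inr (Or.inl ⟨z, hT', h⟩)
    · exfalso
      have : vec z = -vec b := by rw [h, hc]; abel
      exact vec_ne_neg z b this
    · exfalso
      have : vec z = vec b := by rw [h, hc]; abel
      exact hzTm (by rw [hT, vec_injective this]; simp)
  · -- pair {b, c}
    have hbT' : b ∈ T'.1 := hmem b (hp ▸ by simp)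
    have hcT' : c ∈ T'.1 := hmem c (hp ▸ by simp)
    obtain ⟨z, hzp, hT'⟩ := third_elem hcard3 Abc.ne hbT' hcT'
    have hzTm : z ∉ T.1 := hzT z (hT' ▸ by simp) (hp ▸ hzp)
    have hzb : z ≠ b := by rintro rfl; simp at hzp
    have hzc : z ≠ c := by rintro rfl; simp at hzp
    have Abz : fareyGraph.Adj b z := hclique (by rw [hT']; simp) (by rw [hT']; simp) hzb.symm
    have Acz : fareyGraph.Adj c z := hclique (by rw [hT']; simp) (by rw [hT']; simp) hzc.symm
    rcases common_nbr Abc Abz Acz with h | h | h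
    · exact Or.inr (Or.inr ⟨z, hT', h⟩)
    · exfalso
      have : vec z = -vec a := by rw [h, hc]; abel
      exact vec_ne_neg z a this
    · exfalso
      have : vec z = vec a := by rw [h, hc]; abel
      exact hzTm (by rw [hT, vec_injective this]; simp)

lemma dt_sub_left (u v w : ℤ × ℤ) : dt (u - v) w = dt u w - dt v w := by
  simp only [dt, Prod.fst_sub, Prod.snd_sub]; ring

lemma dt_add_left (u v w : ℤ × ℤ) : dt (u + v) w = dt u w + dt v w := by
  simp only [dt, Prod.fst_add, Prod.snd_add]; ring

lemma dt_self (u : ℤ × ℤ) : dt u u = 0 := by simp only [dt]; ring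

lemma mk_clique {x y : Option ℚ} (hxy : fareyGraph.Adj x y) {u : ℤ × ℤ}
    (hux : |dt u (vec x)| = 1) (huy : |dt u (vec y)| = 1) :
    fareyGraph.IsNClique 3 {x, y, ovtx u} := by
  have hp : Prim u := prim_of_det hux
  have h1 : fareyGraph.Adj (ovtx u) x := (adj_ovtx hp x).mpr hux
  have h2 : fareyGraph.Adj (ovtx u) y := (adj_ovtx hp y).mpr huy
  exact SimpleGraph.is3Clique_triple_iff.mpr ⟨hxy, h1.symm, h2.symm⟩

lemma dual_adj_mk {T T' : FareyTriangle} {x y z w : Option ℚ}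
    (hT : T.1 = {x, y, z}) (hT' : T'.1 = {x, y, w}) (hxy : x ≠ y)
    (hzx : z ≠ x) (hzy : z ≠ y) (hzw : z ≠ w) :
    fareyDual.Adj T T' := by
  show T ≠ T' ∧ (T.1 ∩ T'.1).card = 2
  constructor
  · intro h
    have : z ∈ T'.1 := by rw [← h, hT]; simp
    rw [hT'] at this
    simp only [Finset.mem_insert, Finset.mem_singleton] at this
    tauto
  · have : T.1 ∩ T'.1 = {x, y} := by
      rw [hT, hT']
      ext u
      simp only [Finset.mem_inter, Finset.mem_insert, Finset.mem_singleton]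
      constructor
      · rintro ⟨h1 | h1 | rfl, h2 | h2 | h2⟩ <;> tauto
      · rintro (rfl | rfl) <;> simp
    rw [this, Finset.card_pair hxy]

lemma clique_adjs {T : FareyTriangle} {x y z : Option ℚ} (hT : T.1 = {x, y, z}) :
    fareyGraph.Adj x y ∧ fareyGraph.Adj x z ∧ fareyGraph.Adj y z :=
  SimpleGraph.is3Clique_triple_iff.mp (hT ▸ T.2)

noncomputable def mz (T : FareyTriangle) : ℤ := ∑ x ∈ T.1, (vec x).2

noncomputable def sz (T : FareyTriangle) : ℤ := ∑ x ∈ T.1, (vec x).1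

noncomputable def φ (T : FareyTriangle) : ℕ ×ₗ ℕ :=
  toLex ((mz T).toNat, (2 * sz T - 3).natAbs / 2)

lemma sum3 (f : Option ℚ → ℤ) {a b c : Option ℚ} (hab : a ≠ b) (hac : a ≠ c) (hbc : b ≠ c) :
    ∑ x ∈ ({a, b, c} : Finset (Option ℚ)), f x = f a + f b + f c := by
  rw [Finset.sum_insert (by simp [hab, hac]), Finset.sum_insert (by simp [hbc]),
    Finset.sum_singleton]
  ring

lemma mz_eq {T : FareyTriangle} {x y z : Option ℚ} (hT : T.1 = {x, y, z}) :
    mz T = (vec x).2 + (vec y).2 + (vec z).2 := by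
  obtain ⟨h1, h2, h3⟩ := clique_adjs hT
  rw [mz, hT, sum3 _ h1.ne h2.ne h3.ne]

lemma sz_eq {T : FareyTriangle} {x y z : Option ℚ} (hT : T.1 = {x, y, z}) :
    sz T = (vec x).1 + (vec y).1 + (vec z).1 := by
  obtain ⟨h1, h2, h3⟩ := clique_adjs hT
  rw [sz, hT, sum3 _ h1.ne h2.ne h3.ne]

def T₀ : FareyTriangle :=
  ⟨{none, some 0, some 1}, by
    refine SimpleGraph.is3Clique_triple_iff.mpr ⟨?_, ?_, ?_⟩
    · show fareyAdj none (some 0); show (0 : ℚ).den = 1; exact Rat.den_zero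
    · show fareyAdj none (some 1); show (1 : ℚ).den = 1; exact Rat.den_one
    · show fareyAdj (some 0) (some 1)
      show |(0 : ℚ).num * ((1 : ℚ).den : ℤ) - (1 : ℚ).num * ((0 : ℚ).den : ℤ)| = 1
      rw [Rat.num_zero, Rat.num_one, Rat.den_zero, Rat.den_one]
      norm_num⟩

lemma vec_ne_zero (x : Option ℚ) : vec x ≠ 0 := by
  cases x with
  | none => intro h; exact absurd (congrArg Prod.fst h) (by simp [vec])
  | some q => intro h
              have := congrArg Prod.snd h
              simp only [vec, Prod.snd_zero] at this
              exact q.den_nz (by exact_mod_cast this)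

lemma eq_of_pairvec {T' P : FareyTriangle} {a b x d : Option ℚ}
    (hT' : T'.1 = {a, b, x}) (hP : P.1 = {a, b, d})
    (hx : vec x = vec a - vec b ∨ vec x = vec b - vec a)
    (hd : vec d = vec a - vec b ∨ vec d = vec b - vec a) : T' = P := by
  have hxd : x = d := by
    rcases hx with h1 | h1 <;> rcases hd with h2 | h2
    · exact vec_injective (h1.trans h2.symm)
    · exact absurd (by rw [h2, neg_sub]; exact h1) (vec_ne_neg x d)
    · exact absurd (by rw [h2, neg_sub]; exact h1) (vec_ne_neg x d)
    · exact vec_injective (h1.trans h2.symm)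
  exact Subtype.ext (by rw [hT', hxd, hP])

lemma parent_aux (T : FareyTriangle) {a b c : Option ℚ} (hT : T.1 = {a, b, c})
    (hab : fareyGraph.Adj a b) (hsum : vec c = vec a + vec b)
    (hle : (vec a).2 ≤ (vec b).2) (hT0 : T ≠ T₀) :
    ∃ P, fareyDual.Adj T P ∧ φ P < φ T ∧ ∀ T', fareyDual.Adj T T' → T' = P ∨ φ T < φ T' := by
  obtain ⟨hac, hbc⟩ := adj_of_sum hab hsum
  have dab := adj_iff.mp hab
  have dac := adj_iff.mp hac
  have hc1 : (vec c).1 = (vec a).1 + (vec b).1 := by rw [hsum]; exact Prod.fst_add ..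
  have hc2 : (vec c).2 = (vec a).2 + (vec b).2 := by rw [hsum]; exact Prod.snd_add ..
  have ha2 := vec_snd_nonneg a
  have hb2 := vec_snd_nonneg b
  -- the opposite vertex across the edge (a, b)
  have hd1 : |dt (vec a - vec b) (vec a)| = 1 := by
    rw [dt_sub_left, dt_self, zero_sub, abs_neg, abs_dt_swap]; exact dab
  have hd2 : |dt (vec a - vec b) (vec b)| = 1 := by
    rw [dt_sub_left, dt_self, sub_zero]; exact dab
  have hPcl : fareyGraph.IsNClique 3 {a, b, ovtx (vec a - vec b)} := mk_clique hab hd1 hd2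
  obtain ⟨-, hPad, hPbd⟩ := SimpleGraph.is3Clique_triple_iff.mp hPcl
  have hdvec : vec (ovtx (vec a - vec b)) = vec a - vec b ∨
      vec (ovtx (vec a - vec b)) = vec b - vec a := by
    rcases vec_ovtx (prim_of_det hd1) with h | h
    · exact Or.inl h
    · right; rw [h, neg_sub]
  have hd2' := vec_snd_nonneg (ovtx (vec a - vec b))
  have hcd : c ≠ ovtx (vec a - vec b) := by
    intro h
    rcases hdvec with h' | h' <;> rw [← h] at h' <;> rw [hsum] at h'
    · have e1 := congrArg Prod.fst h'
      have e2 := congrArg Prod.snd h'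
      simp only [Prod.fst_add, Prod.snd_add, Prod.fst_sub, Prod.snd_sub] at e1 e2
      exact vec_ne_zero b (Prod.ext (show _ = (0:ℤ) by omega) (show _ = (0:ℤ) by omega))
    · have e1 := congrArg Prod.fst h'
      have e2 := congrArg Prod.snd h'
      simp only [Prod.fst_add, Prod.snd_add, Prod.fst_sub, Prod.snd_sub] at e1 e2
      exact vec_ne_zero a (Prod.ext (show _ = (0:ℤ) by omega) (show _ = (0:ℤ) by omega))
  have hmzT : mz T = (vec a).2 + (vec b).2 + (vec c).2 := mz_eq hT
  have hszT : sz T = (vec a).1 + (vec b).1 + (vec c).1 := sz_eq hT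
  rcases eq_or_lt_of_le ha2 with hqa0 | hqa
  · -- a = ∞ ; b is an integer n
    have hanone : a = none := vec_snd_eq_zero.mp hqa0.symm
    have hva : vec a = (1, 0) := by rw [hanone]; rfl
    have hqb : (vec b).2 = 1 := by
      have : dt (vec a) (vec b) = (vec b).2 := by
        rw [hva]; simp only [dt]; ring
      rw [this] at dab
      rcases abs_eq (by norm_num : (0:ℤ) ≤ 1) |>.mp dab with h | h
      · exact h
      · omega
    have hva1 : (vec a).1 = 1 := by rw [hva]
    set n := (vec b).1 with hn
    have hvb : vec b = (n, 1) := Prod.ext rfl hqb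
    have hvc : vec c = (n + 1, 1) := Prod.ext (show _ = n+1 by omega) (show _ = (1:ℤ) by omega)
    rcases lt_trichotomy n 0 with hn0 | hn0 | hn0
    · -- n ≤ -1 : parent is across the edge (a, c)
      have he1 : |dt (vec a + vec c) (vec a)| = 1 := by
        rw [dt_add_left, dt_self, zero_add, abs_dt_swap]; exact dac
      have he2 : |dt (vec a + vec c) (vec c)| = 1 := by
        rw [dt_add_left, dt_self, add_zero]; exact dac
      have hQcl : fareyGraph.IsNClique 3 {a, c, ovtx (vec a + vec c)} := mk_clique hac he1 he2
      obtain ⟨-, hQae, hQce⟩ := SimpleGraph.is3Clique_triple_iff.mp hQcl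
      have hevec : vec (ovtx (vec a + vec c)) = vec a + vec c :=
        vec_ovtx_pos (prim_of_det he1) (by rw [Prod.snd_add]; omega)
      have hTacb : T.1 = {a, c, b} := by rw [hT]; ext u; simp; tauto
      have hbe : b ≠ ovtx (vec a + vec c) := by
        intro h
        have := congrArg Prod.fst (h ▸ hevec)
        rw [Prod.fst_add, hva, hvc] at this
        simp only [hn] at this
        omega
      refine ⟨⟨_, hQcl⟩, dual_adj_mk hTacb rfl hac.ne hab.ne.symm hbc.ne hbe, ?_, ?_⟩
      · -- φ decreases
        have hmzQ : mz (⟨_, hQcl⟩ : FareyTriangle) =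
            (vec a).2 + (vec c).2 + (vec (ovtx (vec a + vec c))).2 := mz_eq rfl
        have hszQ : sz (⟨_, hQcl⟩ : FareyTriangle) =
            (vec a).1 + (vec c).1 + (vec (ovtx (vec a + vec c))).1 := sz_eq rfl
        have e1 := congrArg Prod.fst hevec
        have e2 := congrArg Prod.snd hevec
        simp only [Prod.fst_add, Prod.snd_add] at e1 e2
        show toLex _ < toLex _
        rw [Prod.Lex.lt_iff]
        have hva1 : (vec a).1 = 1 := by rw [hva]
        have hvc1 : (vec c).1 = n + 1 := by rw [hvc]
        have hvc2 : (vec c).2 = 1 := by rw [hvc]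
        simp only [ofLex_toLex]
        omega
      · intro T' hA
        rcases nbr_struct hT hab hsum hA with ⟨x, hT', hx⟩ | ⟨x, hT', hx⟩ | ⟨x, hT', hx⟩
        · -- across (a,b) : the next triangle along the line, φ grows
          right
          have hvx : vec x = (n - 1, 1) := by
            rcases hx with h | h
            · exfalso
              have := congrArg Prod.snd h
              rw [Prod.snd_sub, hqb] at this
              have := vec_snd_nonneg x
              omega
            · rw [h, hva, hvb]; exact Prod.ext (by simp) (by simp)
          obtain ⟨nab, nax, nbx⟩ := clique_adjs hT'
          have hmzT' : mz T' = (vec a).2 + (vec b).2 + (vec x).2 := mz_eq hT'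
          have hszT' : sz T' = (vec a).1 + (vec b).1 + (vec x).1 := sz_eq hT'
          have hvx1 : (vec x).1 = n - 1 := by rw [hvx]
          have hvx2 : (vec x).2 = 1 := by rw [hvx]
          have hva1 : (vec a).1 = 1 := by rw [hva]
          have hvc1 : (vec c).1 = n + 1 := by rw [hvc]
          have hvc2 : (vec c).2 = 1 := by rw [hvc]
          show toLex _ < toLex _
          rw [Prod.Lex.lt_iff]
          simp only [ofLex_toLex]
          omega
        · -- across (a,c) : this is the parent
          left
          exact Subtype.ext (by rw [hT', vec_injective (hx.trans hevec.symm)])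
        · -- across (b,c) : φ grows (denominator sum 4)
          right
          have e2 : (vec x).2 = (vec b).2 + (vec c).2 := by
            rw [hx]; exact Prod.snd_add ..
          have hmzT' : mz T' = (vec b).2 + (vec c).2 + (vec x).2 := mz_eq hT'
          have hvc2 : (vec c).2 = 1 := by rw [hvc]
          show toLex _ < toLex _
          rw [Prod.Lex.lt_iff]
          simp only [ofLex_toLex]
          omega
    · -- n = 0 : T = T₀, contradiction
      exfalso
      apply hT0
      have hb0 : b = some 0 := by
        apply vec_injective
        rw [hvb, hn0]
        show _ = ((0 : ℚ).num, ((0 : ℚ).den : ℤ))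
        rw [Rat.num_zero, Rat.den_zero]; rfl
      have hc0 : c = some 1 := by
        apply vec_injective
        rw [hvc, hn0]
        show _ = ((1 : ℚ).num, ((1 : ℚ).den : ℤ))
        rw [Rat.num_one, Rat.den_one]; rfl
      exact Subtype.ext (by rw [hT, hanone, hb0, hc0]; rfl)
    · -- n ≥ 1 : parent is across the edge (a, b)
      have hvd : vec (ovtx (vec a - vec b)) = (n - 1, 1) := by
        rcases hdvec with h | h
        · exfalso
          have := congrArg Prod.snd h
          rw [Prod.snd_sub, hqb] at this
          omega
        · rw [h, hva, hvb]; exact Prod.ext (by simp) (by simp)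
      refine ⟨⟨_, hPcl⟩, dual_adj_mk hT rfl hab.ne hac.ne.symm hbc.ne.symm hcd, ?_, ?_⟩
      · have hmzP : mz (⟨_, hPcl⟩ : FareyTriangle) =
            (vec a).2 + (vec b).2 + (vec (ovtx (vec a - vec b))).2 := mz_eq rfl
        have hszP : sz (⟨_, hPcl⟩ : FareyTriangle) =
            (vec a).1 + (vec b).1 + (vec (ovtx (vec a - vec b))).1 := sz_eq rfl
        have hvd1 : (vec (ovtx (vec a - vec b))).1 = n - 1 := by rw [hvd]
        have hvd2 : (vec (ovtx (vec a - vec b))).2 = 1 := by rw [hvd]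
        have hva1 : (vec a).1 = 1 := by rw [hva]
        have hvc1 : (vec c).1 = n + 1 := by rw [hvc]
        have hvc2 : (vec c).2 = 1 := by rw [hvc]
        show toLex _ < toLex _
        rw [Prod.Lex.lt_iff]
        simp only [ofLex_toLex]
        omega
      · intro T' hA
        rcases nbr_struct hT hab hsum hA with ⟨x, hT', hx⟩ | ⟨x, hT', hx⟩ | ⟨x, hT', hx⟩
        · exact Or.inl (eq_of_pairvec hT' rfl hx hdvec)
        · -- across (a,c) : φ grows along the line
          right
          have e1 := congrArg Prod.fst hx
          have e2 := congrArg Prod.snd hx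
          simp only [Prod.fst_add, Prod.snd_add] at e1 e2
          have hmzT' : mz T' = (vec a).2 + (vec c).2 + (vec x).2 := mz_eq hT'
          have hszT' : sz T' = (vec a).1 + (vec c).1 + (vec x).1 := sz_eq hT'
          have hva1 : (vec a).1 = 1 := by rw [hva]
          have hvc1 : (vec c).1 = n + 1 := by rw [hvc]
          have hvc2 : (vec c).2 = 1 := by rw [hvc]
          show toLex _ < toLex _
          rw [Prod.Lex.lt_iff]
          simp only [ofLex_toLex]
          omega
        · right
          have e2 : (vec x).2 = (vec b).2 + (vec c).2 := by
            rw [hx]; exact Prod.snd_add ..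
          have hmzT' : mz T' = (vec b).2 + (vec c).2 + (vec x).2 := mz_eq hT'
          have hvc2 : (vec c).2 = 1 := by rw [hvc]
          show toLex _ < toLex _
          rw [Prod.Lex.lt_iff]
          simp only [ofLex_toLex]
          omega
  · -- both denominators positive: parent across (a, b), mz strictly decreases
    refine ⟨⟨_, hPcl⟩, dual_adj_mk hT rfl hab.ne hac.ne.symm hbc.ne.symm hcd, ?_, ?_⟩
    · have hmzP : mz (⟨_, hPcl⟩ : FareyTriangle) =
          (vec a).2 + (vec b).2 + (vec (ovtx (vec a - vec b))).2 := mz_eq rfl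
      have hdq : (vec (ovtx (vec a - vec b))).2 = (vec a).2 - (vec b).2 ∨
          (vec (ovtx (vec a - vec b))).2 = (vec b).2 - (vec a).2 := by
        rcases hdvec with h | h <;> [left; right] <;> rw [h, Prod.snd_sub]
      show toLex _ < toLex _
      rw [Prod.Lex.lt_iff]
      simp only [ofLex_toLex]
      omega
    · intro T' hA
      rcases nbr_struct hT hab hsum hA with ⟨x, hT', hx⟩ | ⟨x, hT', hx⟩ | ⟨x, hT', hx⟩
      · exact Or.inl (eq_of_pairvec hT' rfl hx hdvec)
      · right
        have e2 : (vec x).2 = (vec a).2 + (vec c).2 := by rw [hx]; exact Prod.snd_add ..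
        have hmzT' : mz T' = (vec a).2 + (vec c).2 + (vec x).2 := mz_eq hT'
        show toLex _ < toLex _
        rw [Prod.Lex.lt_iff]
        simp only [ofLex_toLex]
        omega
      · right
        have e2 : (vec x).2 = (vec b).2 + (vec c).2 := by rw [hx]; exact Prod.snd_add ..
        have hmzT' : mz T' = (vec b).2 + (vec c).2 + (vec x).2 := mz_eq hT'
        show toLex _ < toLex _
        rw [Prod.Lex.lt_iff]
        simp only [ofLex_toLex]
        omega

lemma parent_spec (T : FareyTriangle) (hT0 : T ≠ T₀) :
    ∃ P, fareyDual.Adj T P ∧ φ P < φ T ∧ ∀ T', fareyDual.Adj T T' → T' = P ∨ φ T < φ T' := by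
  obtain ⟨a, b, c, hT, hab, hsum⟩ := tri_struct T
  rcases le_total (vec a).2 (vec b).2 with h | h
  · exact parent_aux T hT hab hsum h hT0
  · exact parent_aux T (hT.trans (Finset.insert_comm a b {c})) hab.symm
      (hsum.trans (add_comm _ _)) h hT0

lemma vec_some_zero : vec (some (0 : ℚ)) = (0, 1) := by
  show ((0 : ℚ).num, ((0 : ℚ).den : ℤ)) = (0, 1)
  rw [Rat.num_zero, Rat.den_zero]; rfl

lemma vec_some_one : vec (some (1 : ℚ)) = (1, 1) := by
  show ((1 : ℚ).num, ((1 : ℚ).den : ℤ)) = (1, 1)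
  rw [Rat.num_one, Rat.den_one]; rfl

lemma root_spec (T' : FareyTriangle) (hA : fareyDual.Adj T₀ T') : φ T₀ < φ T' := by
  have hT : T₀.1 = {none, some (0 : ℚ), some (1 : ℚ)} := rfl
  obtain ⟨hab, hac, hbc⟩ := clique_adjs hT
  have hvn : vec none = ((1 : ℤ), (0 : ℤ)) := rfl
  have hsum : vec (some (1 : ℚ)) = vec none + vec (some (0 : ℚ)) := by
    rw [vec_some_one, vec_some_zero, hvn]
    exact Prod.ext (by norm_num) (by norm_num)
  have hmzT0 : mz T₀ = 2 := by
    rw [mz_eq hT, hvn, vec_some_zero, vec_some_one]; norm_num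
  have hszT0 : sz T₀ = 2 := by
    rw [sz_eq hT, hvn, vec_some_zero, vec_some_one]; norm_num
  rcases nbr_struct hT hab hsum hA with ⟨x, hT', hx⟩ | ⟨x, hT', hx⟩ | ⟨x, hT', hx⟩
  · have hvx : vec x = (-1, 1) := by
      rcases hx with h | h
      · exfalso
        have := congrArg Prod.snd h
        rw [Prod.snd_sub, hvn, vec_some_zero] at this
        have := vec_snd_nonneg x
        omega
      · rw [h, hvn, vec_some_zero]; exact Prod.ext (by norm_num) (by norm_num)
    have hmzT' : mz T' = (vec none).2 + (vec (some (0:ℚ))).2 + (vec x).2 := mz_eq hT'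
    have hszT' : sz T' = (vec none).1 + (vec (some (0:ℚ))).1 + (vec x).1 := sz_eq hT'
    rw [hvn, vec_some_zero, hvx] at hmzT' hszT'
    show toLex _ < toLex _
    rw [Prod.Lex.lt_iff]
    simp only [hmzT0, hszT0]
    norm_num at hmzT' hszT' ⊢
    omega
  · have hvx : vec x = (2, 1) := by
      rw [hx, hvn, vec_some_one]; exact Prod.ext (by norm_num) (by norm_num)
    have hmzT' : mz T' = (vec none).2 + (vec (some (1:ℚ))).2 + (vec x).2 := mz_eq hT'
    have hszT' : sz T' = (vec none).1 + (vec (some (1:ℚ))).1 + (vec x).1 := sz_eq hT'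
    rw [hvn, vec_some_one, hvx] at hmzT' hszT'
    show toLex _ < toLex _
    rw [Prod.Lex.lt_iff]
    simp only [hmzT0, hszT0]
    norm_num at hmzT' hszT' ⊢
    omega
  · have hvx : vec x = (1, 2) := by
      rw [hx, vec_some_zero, vec_some_one]; exact Prod.ext (by norm_num) (by norm_num)
    have hmzT' : mz T' = (vec (some (0:ℚ))).2 + (vec (some (1:ℚ))).2 + (vec x).2 := mz_eq hT'
    rw [vec_some_zero, vec_some_one, hvx] at hmzT'
    show toLex _ < toLex _
    rw [Prod.Lex.lt_iff]
    simp only [hmzT0]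
    norm_num at hmzT' ⊢
    omega

open SimpleGraph Walk in
lemma no_cycle_at {V α : Type*} [LinearOrder α] {G : SimpleGraph V} (φ : V → α) {x : V}
    (c : G.Walk x x) (hc : c.IsCycle) (hmax : ∀ y ∈ c.support, φ y ≤ φ x)
    (huniq : ∀ w w', G.Adj x w → G.Adj x w' → φ w ≤ φ x → φ w' ≤ φ x → w = w') : False := by
  cases c with
  | nil => simpa [Walk.isCycle_def] using hc
  | @cons _ w _ h p =>
    obtain ⟨hp, hedge⟩ := (Walk.cons_isCycle_iff p h).mp hc
    have hxw : x ≠ w := h.ne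
    obtain ⟨w', hadj', q, hq⟩ := Walk.exists_eq_cons_of_ne hxw p.reverse
    have hw'p : w' ∈ p.support := by
      have : w' ∈ p.reverse.support := by
        rw [hq, Walk.support_cons]
        exact List.mem_cons_of_mem _ q.start_mem_support
      rwa [Walk.support_reverse, List.mem_reverse] at this
    have hw'max : φ w' ≤ φ x := hmax w' (by rw [Walk.support_cons]; exact List.mem_cons_of_mem _ hw'p)
    have hwmax : φ w ≤ φ x := hmax w (by rw [Walk.support_cons]; exact List.mem_cons_of_mem _ p.start_mem_support)
    have hww' : w = w' := huniq w w' h hadj' hwmax hw'max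
    apply hedge
    have : s(x, w') ∈ p.reverse.edges := by rw [hq, Walk.edges_cons]; exact List.mem_cons_self
    rw [Walk.edges_reverse, List.mem_reverse] at this
    subst hww'
    exact this

lemma isTree_abstract {V α : Type*} [LinearOrder α] [WellFoundedLT α]
    (G : SimpleGraph V) (φ : V → α) (r : V)
    (hroot : ∀ w, G.Adj r w → φ r < φ w)
    (hpar : ∀ v, v ≠ r → ∃ p, G.Adj v p ∧ φ p < φ v ∧
      ∀ w, G.Adj v w → w = p ∨ φ v < φ w) :
    G.IsTree := by
  have key : ∀ a : α, ∀ v, φ v = a → G.Reachable v r := by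
    intro a
    apply WellFoundedLT.induction a
    intro a ih v hv
    subst hv
    by_cases hvr : v = r
    · rw [hvr]
    · obtain ⟨p, hadj, hlt, -⟩ := hpar v hvr
      exact (hadj.reachable).trans (ih (φ p) hlt p rfl)
  have hreach : ∀ v, G.Reachable v r := fun v => key (φ v) v rfl
  have hne : Nonempty V := ⟨r⟩
  constructor
  · exact ⟨fun u v => (hreach u).trans (hreach v).symm⟩
  · classical
    intro v c hc
    have hne : c.support.toFinset.Nonempty :=
      ⟨v, List.mem_toFinset.mpr c.start_mem_support⟩
    obtain ⟨x, hxmem, hmaxf⟩ := Finset.exists_max_image c.support.toFinset φ hne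
    have hx : x ∈ c.support := List.mem_toFinset.mp hxmem
    have hsub : ∀ y, y ∈ (c.rotate x hx).support → y ∈ c.support := by
      intro y hy
      rw [SimpleGraph.Walk.rotate, SimpleGraph.Walk.mem_support_append_iff] at hy
      rcases hy with hy | hy
      · exact SimpleGraph.Walk.support_dropUntil_subset c hx hy
      · exact SimpleGraph.Walk.support_takeUntil_subset c hx hy
    have hmax : ∀ y ∈ (c.rotate x hx).support, φ y ≤ φ x := fun y hy =>
      hmaxf y (List.mem_toFinset.mpr (hsub y hy))
    refine no_cycle_at φ (c.rotate x hx) (hc.rotate hx) hmax ?_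
    intro w w' haw haw' hwle hw'le
    by_cases hxr : x = r
    · exact absurd (hroot w (hxr ▸ haw)) (by rw [← hxr]; exact not_lt.mpr hwle)
    · obtain ⟨p, -, -, hall⟩ := hpar x hxr
      have h1 : w = p := (hall w haw).resolve_right (not_lt.mpr hwle)
      have h2 : w' = p := (hall w' haw').resolve_right (not_lt.mpr hw'le)
      rw [h1, h2]

theorem farey_dual_isTree : fareyDual.IsTree := by
  apply isTree_abstract fareyDual φ T₀
  · exact root_spec
  · exact parent_spec

end FT

/-- The Farey dual graph `𝔽*` is a tree: it is connected and acyclic. -/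
theorem fareyDual_isTree : fareyDual.IsTree := FT.farey_dual_isTree
end

section
/- In the model graph G, for every Farey vertex x the edge joining x̃ to x is contained in no triangle of G; that is, x and x̃ have no common neighbour in G. -/
/-- Vertices of the model graph: Farey vertices `.inl x`, dual vertices
`.inr (.inl x)` (written `x̃`), and triangle-vertices `.inr (.inr T)`. -/
abbrev ModelVertex : Type := Option ℚ ⊕ (Option ℚ ⊕ FareyTriangle)

/-- Adjacency relation of the model graph `G`. -/
def modelAdj : ModelVertex → ModelVertex → Prop
  | .inl x, .inl y => fareyGraph.Adj x y
  | .inl x, .inr (.inl y) => x = y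
  | .inr (.inl x), .inl y => x = y
  | .inr (.inl x), .inr (.inr T) => x ∈ T.1
  | .inr (.inr T), .inr (.inl x) => x ∈ T.1
  | .inr (.inr T), .inr (.inr T') => T ≠ T' ∧ (T.1 ∩ T'.1).card = 2
  | _, _ => False

/-- The model graph `G` of the pants graph of `N₃`: on `V(𝔽) ⊔ V(𝔽) ⊔ T(𝔽)`, with
edges `x—y` for `x, y` adjacent in `𝔽`, `x̃—x`, `x̃—T` whenever `x ∈ T`, and `T—T'`
whenever `T ≠ T'` and `|T ∩ T'| = 2`. -/
def modelGraph : SimpleGraph ModelVertex where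
  Adj := modelAdj
  symm := by
    constructor
    rintro (x | x | T) (y | y | T') h
    · exact fareyGraph.symm.symm _ _ h
    · exact h.symm
    · exact h.elim
    · exact h.symm
    · exact h.elim
    · exact h
    · exact h.elim
    · exact h
    · exact ⟨h.1.symm, by
        have := h.2
        rwa [Finset.inter_comm]⟩
  loopless := by
    constructor
    rintro (x | x | T) h
    · exact fareyGraph.loopless.irrefl x h
    · exact h.elim
    · exact h.1 rfl

/-- In the model graph `G`, for every Farey vertex `x`, the edge joining `x̃` to `x`
is contained in no triangle of `G`: `x` and `x̃` have no common neighbour. -/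
theorem modelGraph_matching_edge_in_no_triangle (x : Option ℚ) (w : ModelVertex) :
    ¬ (modelGraph.Adj (.inl x) w ∧ modelGraph.Adj (.inr (.inl x)) w) := by
  rintro ⟨h1, h2⟩
  rcases w with y | y | T
  · exact fareyGraph.loopless.irrefl x (h2 ▸ h1)
  · exact h2
  · exact h1
end
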